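/- In the constrained star network where each external vertex v_i is connected to the center u with capacity c_i and the center's score is fixed at M = ⌊(Σ_i c_i)/2⌋, the steady-state failure probability of a one-unit payment between any two external vertices v_i and v_j is at least 2/(c_i + c_j + 2). -/

import Mathlib

open Finset

/-- map a configuration to the canonical "failure" configuration in its class -/
def starFix {n : ℕ} (cj : ℕ) (i j : Fin n) (x : Fin n → ℕ) : Fin n → ℕ :=
  if x i + x j ≤ cj then Function.update (Function.update x j (x i + x j)) i 0
  else Function.update (Function.update x i (x i + x j - cj)) j cj

lemma starFix_apply_ne {n : ℕ} (cj : ℕ) (i j : Fin n) (x : Fin n → ℕ) (k : Fin n)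
    (hki : k ≠ i) (hkj : k ≠ j) : starFix cj i j x k = x k := by
  unfold starFix
  split_ifs <;>
    simp [Function.update_of_ne hki, Function.update_of_ne hkj]

lemma starFix_sum {n : ℕ} (cj : ℕ) (i j : Fin n) (hij : i ≠ j) (x : Fin n → ℕ) :
    starFix cj i j x i + starFix cj i j x j = x i + x j := by
  unfold starFix
  have hji : j ≠ i := hij.symm
  split_ifs with h
  · rw [Function.update_self, Function.update_of_ne hji, Function.update_self]
    omega
  · rw [Function.update_self, Function.update_of_ne hij, Function.update_self]
    omega

lemma exists_config : ∀ (n : ℕ) (c : Fin n → ℕ) (M : ℕ), M ≤ ∑ k, c k →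
    ∃ x : Fin n → ℕ, (∀ k, x k ≤ c k) ∧ ∑ k, x k = M := by
  intro n
  induction n with
  | zero =>
    intro c M hM
    simp only [Finset.univ_eq_empty, Finset.sum_empty, Nat.le_zero] at hM
    exact ⟨fun _ => 0, fun k => k.elim0, by simp [hM]⟩
  | succ n ih =>
    intro c M hM
    rw [Fin.sum_univ_succ] at hM
    have h1 : M - min M (c 0) ≤ ∑ k : Fin n, c k.succ := by omega
    obtain ⟨y, hy, hsum⟩ := ih (fun k => c k.succ) _ h1
    refine ⟨Fin.cons (min M (c 0)) y, ?_, ?_⟩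
    · intro k
      refine Fin.cases ?_ ?_ k
      · simpa using min_le_right M (c 0)
      · intro k; simpa using hy k
    · rw [Fin.sum_univ_succ]
      simp only [Fin.cons_zero, Fin.cons_succ]
      rw [hsum]
      omega

theorem constrained_star_failure_lower_bound {n : ℕ} (c : Fin n → ℕ)
    (hc : ∀ k, 0 < c k) (i j : Fin n) (hij : i ≠ j)
    (total fail : Finset (Fin n → ℕ))
    (htotal : total = (Fintype.piFinset fun k => Finset.range (c k + 1)).filter
      (fun x => ∑ k, x k = (∑ k, c k) / 2))
    (hfail : fail = total.filter (fun x => x i = 0 ∨ x j = c j)) :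
    2 / ((c i : ℚ) + (c j : ℚ) + 2) ≤ (fail.card : ℚ) / (total.card : ℚ) := by
  set M := (∑ k, c k) / 2 with hMdef
  set f := starFix (c j) i j with hfdef
  have hji : j ≠ i := hij.symm
  have hmem : ∀ x, x ∈ total ↔ (∀ k, x k ≤ c k) ∧ ∑ k, x k = M := by
    intro x
    simp only [htotal, Finset.mem_filter, Fintype.mem_piFinset, Finset.mem_range,
      Nat.lt_succ_iff]
  -- the sum of f x equals sum of x
  have hsumf : ∀ x : Fin n → ℕ, ∑ k, f x k = ∑ k, x k := by
    intro x
    have hxdec : ∑ k, x k = x i + (x j + ∑ k ∈ (Finset.univ \ {i}) \ {j}, x k) := by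
      rw [← Finset.erase_eq, ← Finset.erase_eq,
        Finset.add_sum_erase _ x (Finset.mem_erase.2 ⟨hji, Finset.mem_univ j⟩),
        Finset.add_sum_erase _ x (Finset.mem_univ i)]
    have hmemj : j ∈ (Finset.univ : Finset (Fin n)) \ {i} := by
      simp [hji]
    have hmemi : i ∈ (Finset.univ : Finset (Fin n)) \ {j} := by
      simp [hij]
    have hcomm : ((Finset.univ : Finset (Fin n)) \ {j}) \ {i}
        = (Finset.univ \ {i}) \ {j} := by
      ext k
      simp only [Finset.mem_sdiff, Finset.mem_singleton]
      tauto
    rw [hfdef]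
    unfold starFix
    split_ifs with h
    · rw [Finset.sum_update_of_mem (Finset.mem_univ i),
        Finset.sum_update_of_mem hmemj]
      omega
    · rw [Finset.sum_update_of_mem (Finset.mem_univ j),
        Finset.sum_update_of_mem hmemi, hcomm]
      omega
  -- f maps total into fail
  have hmap : ∀ x ∈ total, f x ∈ fail := by
    intro x hx
    rw [hmem] at hx
    obtain ⟨hb, hs⟩ := hx
    rw [hfail, Finset.mem_filter, hmem]
    refine ⟨⟨?_, by rw [hsumf, hs]⟩, ?_⟩
    · intro k
      by_cases hki : k = i
      · subst hki
        rw [hfdef]; unfold starFix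
        split_ifs with h
        · rw [Function.update_self]; exact Nat.zero_le _
        · rw [Function.update_of_ne hij, Function.update_self]
          have := hb k; have := hb j; omega
      · by_cases hkj : k = j
        · subst hkj
          rw [hfdef]; unfold starFix
          split_ifs with h
          · rw [Function.update_of_ne hji, Function.update_self]
            have := hb i; have := hb k; omega
          · rw [Function.update_self]
        · rw [hfdef, starFix_apply_ne _ _ _ _ _ hki hkj]; exact hb k
    · rw [hfdef]; unfold starFix
      split_ifs with h
      · left; rw [Function.update_self]
      · right; rw [Function.update_self]
  -- fibers of f have card ≤ min (c i) (c j) + 1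
  have hfiber : ∀ a, (total.filter (fun x => f x = a)).card ≤ min (c i) (c j) + 1 := by
    intro a
    have hagree : ∀ x ∈ total.filter (fun x => f x = a),
        ∀ x' ∈ total.filter (fun x => f x = a),
        (∀ k, k ≠ i → k ≠ j → x k = x' k) ∧ x i + x j = x' i + x' j := by
      intro x hx x' hx'
      rw [Finset.mem_filter] at hx hx'
      have hfa : f x = f x' := by rw [hx.2, hx'.2]
      constructor
      · intro k hki hkj
        have := congrFun hfa k
        rwa [hfdef, starFix_apply_ne _ _ _ _ _ hki hkj,
          starFix_apply_ne _ _ _ _ _ hki hkj] at this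
      · have h1 := starFix_sum (c j) i j hij x
        have h2 := starFix_sum (c j) i j hij x'
        rw [hfdef] at *
        rw [← h1, ← h2, hfa]
    have hinj : ∀ x ∈ total.filter (fun x => f x = a),
        ∀ x' ∈ total.filter (fun x => f x = a), x i = x' i → x = x' := by
      intro x hx x' hx' hii
      obtain ⟨hoff, hsum2⟩ := hagree x hx x' hx'
      funext k
      by_cases hki : k = i
      · subst hki; exact hii
      · by_cases hkj : k = j
        · subst hkj; omega
        · exact hoff k hki hkj
    have hci : (total.filter (fun x => f x = a)).card ≤ c i + 1 := by
      have h2 : (total.filter (fun x => f x = a)).card ≤ (Finset.range (c i + 1)).card := by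
        apply Finset.card_le_card_of_injOn (fun (x : Fin n → ℕ) => x i)
        · intro x hx
          rw [Finset.mem_coe, Finset.mem_filter, hmem] at hx
          exact Finset.mem_range.2 (Nat.lt_succ_of_le (hx.1.1 i))
        · intro x hx x' hx' h
          simp only [Finset.mem_coe] at hx hx'
          exact hinj x hx x' hx' h
      simpa using h2
    have hcj : (total.filter (fun x => f x = a)).card ≤ c j + 1 := by
      have h2 : (total.filter (fun x => f x = a)).card ≤ (Finset.range (c j + 1)).card := by
        apply Finset.card_le_card_of_injOn (fun (x : Fin n → ℕ) => x j)
        · intro x hx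
          rw [Finset.mem_coe, Finset.mem_filter, hmem] at hx
          exact Finset.mem_range.2 (Nat.lt_succ_of_le (hx.1.1 j))
        · intro x hx x' hx' h
          simp only [Finset.mem_coe] at hx hx'
          obtain ⟨hoff, hsum2⟩ := hagree x hx x' hx'
          have hj' : x j = x' j := h
          clear h
          exact hinj x hx x' hx' (by omega)
      simpa using h2
    omega
  have hkey : total.card ≤ (min (c i) (c j) + 1) * fail.card :=
    Finset.card_le_mul_card_image_of_maps_to hmap _ (fun a _ => hfiber a)
  -- total is nonempty
  have htne : 0 < total.card := by
    obtain ⟨x, hx1, hx2⟩ := exists_config n c M (Nat.div_le_self _ _)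
    exact Finset.card_pos.2 ⟨x, (hmem x).2 ⟨hx1, hx2⟩⟩
  have hfne : 0 < fail.card := by
    obtain ⟨x, hx⟩ := Finset.card_pos.1 htne
    exact Finset.card_pos.2 ⟨f x, hmap x hx⟩
  have hnum : 2 * total.card ≤ (c i + c j + 2) * fail.card := by
    calc 2 * total.card ≤ 2 * ((min (c i) (c j) + 1) * fail.card) :=
          Nat.mul_le_mul_left _ hkey
      _ = (2 * (min (c i) (c j) + 1)) * fail.card := by ring
      _ ≤ (c i + c j + 2) * fail.card := Nat.mul_le_mul_right _ (by omega)
  have hT : (0 : ℚ) < (total.card : ℚ) := by exact_mod_cast htne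
  have hF : (0 : ℚ) < (fail.card : ℚ) := by exact_mod_cast hfne
  have hD : (0 : ℚ) < (c i : ℚ) + (c j : ℚ) + 2 := by positivity
  rw [div_le_div_iff₀ hD hT]
  have : (2 * total.card : ℚ) ≤ ((c i + c j + 2) * fail.card : ℚ) := by
    exact_mod_cast hnum
  push_cast at this ⊢
  nlinarith [this]
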